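/- Let I be a real interval and f : I → ℝ a convex function. For every natural number n, every m-tuple (x_1, …, x_m) of self-adjoint n×n complex matrices whose spectra are contained in I, and every m-tuple (a_1, …, a_m) of n×n complex matrices with ∑_{k=1}^m a_k* a_k = 1, one has Tr( f( ∑_{k=1}^m a_k* x_k a_k ) ) ≤ Tr( ∑_{k=1}^m a_k* f(x_k) a_k ), where f is applied to a self-adjoint matrix by the continuous functional calculus (the spectrum of ∑_{k=1}^m a_k* x_k a_k is automatically contained in I, since its numerical range lies in I). -/

import Mathlib

open scoped ComplexOrder Matrix

private lemma quad' {n : ℕ} (W : Matrix (Fin n) (Fin n) ℂ) (d : Fin n → ℝ) (u : Fin n → ℂ) :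
    star u ⬝ᵥ ((W * Matrix.diagonal (Complex.ofReal ∘ d) * Wᴴ) *ᵥ u)
      = ∑ j, (d j : ℂ) * Complex.normSq ((Wᴴ *ᵥ u) j) := by
  rw [← Matrix.mulVec_mulVec, ← Matrix.mulVec_mulVec, Matrix.dotProduct_mulVec]
  have h1 : star u ᵥ* W = star (Wᴴ *ᵥ u) := by
    rw [Matrix.star_mulVec, Matrix.conjTranspose_conjTranspose]
  rw [h1]
  simp [dotProduct, Matrix.mulVec_diagonal, Complex.normSq_eq_conj_mul_self]
  exact Finset.sum_congr rfl fun j _ => by ring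

private lemma dot_sum' {n m : ℕ} (v : Fin n → ℂ) (w : Fin m → Fin n → ℂ) :
    v ⬝ᵥ (∑ k, w k) = ∑ k, v ⬝ᵥ w k := by
  simp only [dotProduct, Finset.sum_apply, Finset.mul_sum]
  exact Finset.sum_comm

private lemma conj_quad' {n : ℕ} (a M : Matrix (Fin n) (Fin n) ℂ) (v : Fin n → ℂ) :
    star v ⬝ᵥ ((aᴴ * M * a) *ᵥ v) = star (a *ᵥ v) ⬝ᵥ (M *ᵥ (a *ᵥ v)) := by
  rw [← Matrix.mulVec_mulVec, ← Matrix.mulVec_mulVec, Matrix.dotProduct_mulVec,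
    Matrix.star_mulVec]

private lemma trace_conj' {n : ℕ} (U M : Matrix (Fin n) (Fin n) ℂ) (hU : U * Uᴴ = 1) :
    M.trace = ∑ i, star (fun r => U r i) ⬝ᵥ (M *ᵥ fun r => U r i) := by
  have h : M.trace = (Uᴴ * M * U).trace := by
    rw [Matrix.trace_mul_cycle, hU, Matrix.one_mul]
  rw [h, Matrix.trace]
  refine Finset.sum_congr rfl fun i _ => ?_
  simp only [Matrix.diag_apply, Matrix.mul_apply, Matrix.conjTranspose_apply,
    dotProduct, Matrix.mulVec, Pi.star_apply, Finset.mul_sum, Finset.sum_mul]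
  rw [Finset.sum_comm]
  exact Finset.sum_congr rfl fun r _ => Finset.sum_congr rfl fun s _ => by
    simp [dotProduct]; ring

theorem jensen_trace_inequality
    (I : Set ℝ) (hI : I.OrdConnected) (f : ℝ → ℝ) (hf : ConvexOn ℝ I f)
    (n m : ℕ) (x a : Fin m → Matrix (Fin n) (Fin n) ℂ)
    (hx : ∀ k, (x k).IsHermitian)
    (hspec : ∀ k, spectrum ℝ (x k) ⊆ I)
    (ha : ∑ k, (a k)ᴴ * a k = 1)
    (hy : (∑ k, (a k)ᴴ * x k * a k).IsHermitian) :
    (hy.cfc f).trace ≤ (∑ k, (a k)ᴴ * (hx k).cfc f * a k).trace := by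
  classical
  set y : Matrix (Fin n) (Fin n) ℂ := ∑ k, (a k)ᴴ * x k * a k with hydef
  set Z : Matrix (Fin n) (Fin n) ℂ := ∑ k, (a k)ᴴ * (hx k).cfc f * a k with hZdef
  set U : Matrix (Fin n) (Fin n) ℂ := (hy.eigenvectorUnitary : Matrix (Fin n) (Fin n) ℂ)
    with hUdef
  have hUm : U ∈ Matrix.unitaryGroup (Fin n) ℂ := hy.eigenvectorUnitary.2
  have hU1 : Uᴴ * U = 1 := by
    simpa [Matrix.star_eq_conjTranspose] using (Matrix.mem_unitaryGroup_iff'.mp hUm)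
  have hU2 : U * Uᴴ = 1 := by
    simpa [Matrix.star_eq_conjTranspose] using (Matrix.mem_unitaryGroup_iff.mp hUm)
  set v : Fin n → Fin n → ℂ := fun i r => U r i with hvdef
  have hUv : ∀ i, Uᴴ *ᵥ v i = Pi.single i 1 := by
    intro i
    have hvm : v i = U *ᵥ Pi.single i 1 := by
      ext r; simp [hvdef, Matrix.mulVec_single]
    rw [hvm, Matrix.mulVec_mulVec, hU1, Matrix.one_mulVec]
  -- weights and eigenvalues
  set W : Fin m → Matrix (Fin n) (Fin n) ℂ :=
    fun k => ((hx k).eigenvectorUnitary : Matrix (Fin n) (Fin n) ℂ) with hWdef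
  have hW2 : ∀ k, W k * (W k)ᴴ = 1 := fun k => by
    simpa [Matrix.star_eq_conjTranspose] using
      (Matrix.mem_unitaryGroup_iff.mp ((hx k).eigenvectorUnitary.2))
  set μ : Fin m → Fin n → ℝ := fun k j => (hx k).eigenvalues j with hμdef
  set u : Fin n → Fin m → Fin n → ℂ := fun i k => a k *ᵥ v i with hudef
  set t : Fin n → Fin m → Fin n → ℝ :=
    fun i k j => Complex.normSq (((W k)ᴴ *ᵥ u i k) j) with htdef
  -- LHS trace
  have hLHS : (hy.cfc f).trace = ∑ i, (f (hy.eigenvalues i) : ℂ) := by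
    rw [Matrix.IsHermitian.cfc, Unitary.conjStarAlgAut_apply, Matrix.trace_mul_cycle]
    rw [show star ((hy.eigenvectorUnitary : Matrix (Fin n) (Fin n) ℂ)) *
      ((hy.eigenvectorUnitary : Matrix (Fin n) (Fin n) ℂ)) = (1 : Matrix (Fin n) (Fin n) ℂ) from
        by rw [Matrix.star_eq_conjTranspose]; exact hU1,
      Matrix.one_mul, Matrix.trace_diagonal]
    simp
  -- RHS trace
  have hRHS : Z.trace = ∑ i, star (v i) ⬝ᵥ (Z *ᵥ v i) := trace_conj' U Z hU2
  rw [hLHS, hRHS]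
  refine Finset.sum_le_sum fun i _ => ?_
  -- per-column facts
  have hterm : ∀ (M : Fin m → Matrix (Fin n) (Fin n) ℂ),
      star (v i) ⬝ᵥ ((∑ k, (a k)ᴴ * M k * a k) *ᵥ v i)
        = ∑ k, star (u i k) ⬝ᵥ (M k *ᵥ u i k) := by
    intro M
    have hsum : (∑ k, (a k)ᴴ * M k * a k) *ᵥ v i = ∑ k, ((a k)ᴴ * M k * a k) *ᵥ v i := by
      ext r
      simp only [Matrix.mulVec, dotProduct, Finset.sum_apply, Matrix.sum_apply,
        Finset.sum_mul]
      rw [Finset.sum_comm]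
    rw [hsum, dot_sum']
    exact Finset.sum_congr rfl fun k _ => conj_quad' (a k) (M k) (v i)
  -- fact A : the RHS entry
  have hA : star (v i) ⬝ᵥ (Z *ᵥ v i) = ∑ k, ∑ j, (f (μ k j) : ℂ) * (t i k j : ℝ) := by
    rw [hZdef, hterm]
    exact Finset.sum_congr rfl fun k _ => by
      rw [show (hx k).cfc f = W k * Matrix.diagonal (Complex.ofReal ∘ f ∘ (hx k).eigenvalues)
          * (W k)ᴴ from rfl]
      exact quad' (W k) (f ∘ μ k) (u i k)
  -- fact B : eigenvalue identity
  have hB : ((hy.eigenvalues i : ℂ)) = ∑ k, ∑ j, (μ k j : ℂ) * (t i k j : ℝ) := by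
    have hy1 : star (v i) ⬝ᵥ (y *ᵥ v i) = (hy.eigenvalues i : ℂ) := by
      have h := quad' U hy.eigenvalues (v i)
      rw [show U * Matrix.diagonal (Complex.ofReal ∘ hy.eigenvalues) * Uᴴ = y from
        hy.spectral_theorem.symm] at h
      rw [h, hUv i]
      simp [Pi.single_apply, apply_ite Complex.normSq, apply_ite Complex.ofReal,
        mul_ite, Finset.sum_ite_eq']
    rw [← hy1, hydef, hterm]
    exact Finset.sum_congr rfl fun k _ => by
      rw [show x k = W k * Matrix.diagonal (Complex.ofReal ∘ (hx k).eigenvalues)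
          * (W k)ᴴ from (hx k).spectral_theorem]
      exact quad' (W k) (μ k) (u i k)
  -- fact C : total weight one
  have hC : (1 : ℂ) = ∑ k, ∑ j, ((t i k j : ℝ) : ℂ) := by
    have hv1 : star (v i) ⬝ᵥ v i = 1 := by
      have := congrArg (fun M => M i i) hU1
      simpa [Matrix.mul_apply, Matrix.conjTranspose_apply, dotProduct,
        Matrix.one_apply] using this
    have h1 : star (v i) ⬝ᵥ ((∑ k, (a k)ᴴ * 1 * (a k)) *ᵥ v i) = 1 := by
      simp only [Matrix.mul_one]
      rw [ha, Matrix.one_mulVec, hv1]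
    rw [← h1, hterm]
    refine Finset.sum_congr rfl fun k _ => ?_
    have hone : (1 : Matrix (Fin n) (Fin n) ℂ)
        = W k * Matrix.diagonal (Complex.ofReal ∘ fun _ => (1:ℝ)) * (W k)ᴴ := by
      have hd : Matrix.diagonal (Complex.ofReal ∘ fun _ => (1:ℝ))
          = (1 : Matrix (Fin n) (Fin n) ℂ) := by
        ext r s; simp [Matrix.diagonal, Matrix.one_apply]
      rw [hd, Matrix.mul_one, hW2 k]
    rw [hone, quad']
    simp [htdef]
  -- pass to real statements
  have hBr : hy.eigenvalues i = ∑ k, ∑ j, t i k j • μ k j := by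
    have : ((hy.eigenvalues i : ℂ)) = ((∑ k, ∑ j, t i k j • μ k j : ℝ) : ℂ) := by
      rw [hB]; push_cast [smul_eq_mul]
      exact Finset.sum_congr rfl fun k _ => Finset.sum_congr rfl fun j _ => by ring
    exact_mod_cast this
  have hCr : ∑ k, ∑ j, t i k j = 1 := by
    have h : (1 : ℂ) = ((∑ k, ∑ j, t i k j : ℝ) : ℂ) := by rw [hC]; push_cast; rfl
    exact_mod_cast h.symm
  -- Jensen
  have hmem : ∀ k j, μ k j ∈ I := fun k j =>
    hspec k ((hx k).eigenvalues_mem_spectrum_real j)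
  have hjensen : f (hy.eigenvalues i) ≤ ∑ k, ∑ j, t i k j • f (μ k j) := by
    have := hf.map_sum_le (t := (Finset.univ : Finset (Fin m × Fin n)))
      (w := fun p => t i p.1 p.2) (p := fun p => μ p.1 p.2)
      (fun p _ => Complex.normSq_nonneg _)
      (by rw [Fintype.sum_prod_type]; exact hCr)
      (fun p _ => hmem p.1 p.2)
    simp only [Fintype.sum_prod_type] at this
    rw [← hBr] at this
    exact this
  -- conclude
  rw [hA]
  calc ((f (hy.eigenvalues i) : ℝ) : ℂ)
      ≤ ((∑ k, ∑ j, t i k j • f (μ k j) : ℝ) : ℂ) := by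
        exact_mod_cast hjensen
    _ = ∑ k, ∑ j, (f (μ k j) : ℂ) * (t i k j : ℝ) := by
        push_cast [smul_eq_mul]
        exact Finset.sum_congr rfl fun k _ => Finset.sum_congr rfl fun j _ => by ring
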